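/- For every θ > 0 and every ε ∈ (0,1), the regularized potential satisfies F_ε(s) ≤ F(s) for every s ∈ [−1,1]. -/

import Mathlib

open Real Set Filter MeasureTheory

/-- The Flory–Huggins potential. -/
noncomputable def FH (θ s : ℝ) : ℝ :=
  (θ / 2) * ((1 + s) * Real.log (1 + s) + (1 - s) * Real.log (1 - s))

/-- Its first derivative on `(-1,1)`. -/
noncomputable def FH' (θ s : ℝ) : ℝ :=
  (θ / 2) * Real.log ((1 + s) / (1 - s))

/-- The regularized (quadratic extension) Flory–Huggins potential `F_ε`.
Note that `F''(±(1-ε)) = θ/(ε(2-ε))`. -/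
noncomputable def FHreg (θ ε s : ℝ) : ℝ :=
  if 1 - ε < s then
    FH θ (1 - ε) + FH' θ (1 - ε) * (s - (1 - ε))
      + (1 / 2) * (θ / (ε * (2 - ε))) * (s - (1 - ε)) ^ 2
  else if s < -1 + ε then
    FH θ (-1 + ε) + FH' θ (-1 + ε) * (s - (-1 + ε))
      + (1 / 2) * (θ / (ε * (2 - ε))) * (s - (-1 + ε)) ^ 2
  else FH θ s

lemma FH_neg (θ s : ℝ) : FH θ (-s) = FH θ s := by
  rw [FH, FH]
  rw [show (1 : ℝ) + -s = 1 - s by ring, show (1 : ℝ) - -s = 1 + s by ring]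
  ring

lemma FH'_neg (θ s : ℝ) : FH' θ (-s) = -(FH' θ s) := by
  rw [FH', FH']
  rw [show (1 + -s) / (1 - -s) = ((1 + s) / (1 - s))⁻¹ by rw [inv_div]; ring_nf]
  rw [Real.log_inv]; ring

lemma continuous_FH (θ : ℝ) : Continuous (FH θ) := by
  have h1 : Continuous fun s : ℝ => (1 + s) * Real.log (1 + s) :=
    Real.continuous_mul_log.comp (continuous_const.add continuous_id)
  have h2 : Continuous fun s : ℝ => (1 - s) * Real.log (1 - s) :=
    Real.continuous_mul_log.comp (continuous_const.sub continuous_id)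
  exact continuous_const.mul (h1.add h2)

lemma hasDerivAt_FH (θ : ℝ) {s : ℝ} (h1 : -1 < s) (h2 : s < 1) :
    HasDerivAt (FH θ) (FH' θ s) s := by
  have hp : (0 : ℝ) < 1 + s := by linarith
  have hm : (0 : ℝ) < 1 - s := by linarith
  have d1 : HasDerivAt (fun x : ℝ => (1 + x) * Real.log (1 + x))
      (Real.log (1 + s) + 1) s := by
    have h0 : HasDerivAt (fun x : ℝ => 1 + x) 1 s := (hasDerivAt_id s).const_add 1
    have := (Real.hasDerivAt_mul_log hp.ne').comp s h0
    exact this.congr_deriv (by ring)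
  have d2 : HasDerivAt (fun x : ℝ => (1 - x) * Real.log (1 - x))
      (-(Real.log (1 - s) + 1)) s := by
    have h0 : HasDerivAt (fun x : ℝ => 1 - x) (-1) s := (hasDerivAt_id s).const_sub 1
    have := (Real.hasDerivAt_mul_log hm.ne').comp s h0
    exact this.congr_deriv (by ring)
  have d := (d1.add d2).const_mul (θ / 2)
  have heq : FH' θ s = (θ / 2) * (Real.log (1 + s) + 1 + -(Real.log (1 - s) + 1)) := by
    rw [FH', Real.log_div hp.ne' hm.ne']; ring
  rw [heq]
  exact d

lemma hasDerivAt_FH' (θ : ℝ) {s : ℝ} (h1 : -1 < s) (h2 : s < 1) :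
    HasDerivAt (FH' θ) (θ / (1 - s ^ 2)) s := by
  have hp : (0 : ℝ) < 1 + s := by linarith
  have hm : (0 : ℝ) < 1 - s := by linarith
  have d1 : HasDerivAt (fun x : ℝ => Real.log (1 + x)) (1 + s)⁻¹ s := by
    have h0 : HasDerivAt (fun x : ℝ => 1 + x) 1 s := (hasDerivAt_id s).const_add 1
    have := (Real.hasDerivAt_log hp.ne').comp s h0
    exact this.congr_deriv (by ring)
  have d2 : HasDerivAt (fun x : ℝ => Real.log (1 - x)) (-(1 - s)⁻¹) s := by
    have h0 : HasDerivAt (fun x : ℝ => 1 - x) (-1) s := (hasDerivAt_id s).const_sub 1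
    have := (Real.hasDerivAt_log hm.ne').comp s h0
    exact this.congr_deriv (by ring)
  have d := (d1.sub d2).const_mul (θ / 2)
  have heq : FH' θ =ᶠ[nhds s]
      fun x : ℝ => (θ / 2) * (Real.log (1 + x) - Real.log (1 - x)) := by
    filter_upwards [Ioo_mem_nhds h1 h2] with x hx
    have hxp : (0 : ℝ) < 1 + x := by linarith [hx.1]
    have hxm : (0 : ℝ) < 1 - x := by linarith [hx.2]
    rw [FH', Real.log_div hxp.ne' hxm.ne']
  have := d.congr_of_eventuallyEq heq
  refine this.congr_deriv ?_
  have h2 : (1 : ℝ) - s ^ 2 ≠ 0 := by nlinarith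
  field_simp
  ring

/-- tangent line inequality for `FH'` (`FH'` is convex on `[0,1)`). -/
lemma FH'_tangent (θ a : ℝ) (hθ : 0 < θ) (ha0 : 0 < a) (ha1 : a < 1) :
    ∀ s ∈ Set.Ico a 1, FH' θ a + (θ / (1 - a ^ 2)) * (s - a) ≤ FH' θ s := by
  set c := θ / (1 - a ^ 2) with hc
  have mono : MonotoneOn (fun x : ℝ => FH' θ x - c * x) (Set.Ico a 1) := by
    have hd : ∀ x ∈ Set.Ioo a 1,
        HasDerivAt (fun x : ℝ => FH' θ x - c * x) (θ / (1 - x ^ 2) - c) x := by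
      intro x hx
      exact (hasDerivAt_FH' θ (by linarith [hx.1]) hx.2).sub
        (by simpa using ((hasDerivAt_id x).const_mul c))
    apply monotoneOn_of_deriv_nonneg (convex_Ico a 1)
    · intro x hx
      have hx0 : -1 < x := by linarith [hx.1]
      exact ((hasDerivAt_FH' θ hx0 hx.2).sub
        (by simpa using ((hasDerivAt_id x).const_mul c))).continuousAt.continuousWithinAt
    · intro x hx
      rw [interior_Ico] at hx
      exact ((hd x hx).differentiableAt).differentiableWithinAt
    · intro x hx
      rw [interior_Ico] at hx
      rw [(hd x hx).deriv]
      have hx1 : 0 < 1 - x ^ 2 := by nlinarith [hx.1, hx.2]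
      have hle : 1 - x ^ 2 ≤ 1 - a ^ 2 := by nlinarith [hx.1]
      have : c ≤ θ / (1 - x ^ 2) := by
        rw [hc]; gcongr
      linarith
  intro s hs
  have := mono (Set.mem_Ico.mpr ⟨le_rfl, ha1⟩) hs hs.1
  simp only at this
  nlinarith [this]

/-- key inequality on the right branch. -/
lemma FH_key (θ ε : ℝ) (hθ : 0 < θ) (hε0 : 0 < ε) (hε1 : ε < 1) :
    ∀ s ∈ Set.Icc (1 - ε) 1,
      FH θ (1 - ε) + FH' θ (1 - ε) * (s - (1 - ε))
        + (1 / 2) * (θ / (ε * (2 - ε))) * (s - (1 - ε)) ^ 2 ≤ FH θ s := by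
  set a : ℝ := 1 - ε with ha
  have ha0 : 0 < a := by rw [ha]; linarith
  have ha1 : a < 1 := by rw [ha]; linarith
  have haa : ε * (2 - ε) = 1 - a ^ 2 := by rw [ha]; ring
  set c := θ / (1 - a ^ 2) with hc
  have mono : MonotoneOn
      (fun x : ℝ => FH θ x - FH' θ a * x - (1 / 2) * c * (x - a) ^ 2) (Set.Icc a 1) := by
    have hd : ∀ x ∈ Set.Ioo a 1,
        HasDerivAt (fun x : ℝ => FH θ x - FH' θ a * x - (1 / 2) * c * (x - a) ^ 2)
          (FH' θ x - FH' θ a - c * (x - a)) x := by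
      intro x hx
      have dq : HasDerivAt (fun x : ℝ => (1 / 2) * c * (x - a) ^ 2) (c * (x - a)) x := by
        have hsq : HasDerivAt (fun x : ℝ => (x - a) ^ 2) (2 * (x - a)) x := by
          exact (((hasDerivAt_id x).sub_const a).pow 2).congr_deriv (by simp)
        have h2 := hsq.const_mul ((1 : ℝ) / 2 * c)
        exact h2.congr_deriv (by ring)
      have := ((hasDerivAt_FH θ (by linarith [hx.1]) hx.2).sub
        (by simpa using ((hasDerivAt_id x).const_mul (FH' θ a)))).sub dq
      exact this
    apply monotoneOn_of_deriv_nonneg (convex_Icc a 1)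
    · exact (((continuous_FH θ).sub (continuous_const.mul continuous_id)).sub
        ((continuous_const.mul ((continuous_id.sub continuous_const).pow 2)))).continuousOn
    · intro x hx
      rw [interior_Icc] at hx
      exact ((hd x hx).differentiableAt).differentiableWithinAt
    · intro x hx
      rw [interior_Icc] at hx
      rw [(hd x hx).deriv]
      have := FH'_tangent θ a hθ ha0 ha1 x ⟨hx.1.le, hx.2⟩
      rw [← hc] at this
      linarith
  intro s hs
  have h := mono (⟨le_rfl, ha1.le⟩ : a ∈ Set.Icc a 1) hs hs.1
  simp only at h
  rw [haa, ← hc]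
  nlinarith [h]

theorem FHreg_le_FH (θ ε : ℝ) (hθ : 0 < θ) (hε : ε ∈ Set.Ioo (0 : ℝ) 1) :
    ∀ s ∈ Set.Icc (-1 : ℝ) 1, FHreg θ ε s ≤ FH θ s := by
  obtain ⟨hε0, hε1⟩ := hε
  intro s hs
  obtain ⟨hs1, hs2⟩ := hs
  rw [FHreg]
  split_ifs with h1 h2
  · exact FH_key θ ε hθ hε0 hε1 s ⟨h1.le, hs2⟩
  · have hkey := FH_key θ ε hθ hε0 hε1 (-s) ⟨by linarith, by linarith⟩
    have e1 : FH θ (-s) = FH θ s := FH_neg θ s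
    have e2 : FH θ (-1 + ε) = FH θ (1 - ε) := by
      rw [show (-1 + ε : ℝ) = -(1 - ε) by ring, FH_neg]
    have e3 : FH' θ (-1 + ε) = -(FH' θ (1 - ε)) := by
      rw [show (-1 + ε : ℝ) = -(1 - ε) by ring, FH'_neg]
    rw [e1] at hkey
    rw [e2, e3]
    nlinarith [hkey]
  · exact le_refl _
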